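/- Degree 2n+1 Yang–Baxter relation for D: let n ≥ 1 and λ₀, λ₁^B,…,λ_n^B, λ₁^C,…,λ_n^C ∈ ℂ be such that all the sinh-denominators occurring below are nonzero. Then, as operators on (ℂ²)^{⊗L}: ∏_{i=1}^{n} [a(λ₀−λ_i^C)/b(λ₀−λ_i^C)] D(λ₀) C(λ_n^C)⋯C(λ₁^C) B(λ₁^B)⋯B(λ_n^B) − ∑_{i=1}^{n} [c(λ₀−λ_i^C)/b(λ₀−λ_i^C)] ∏_{j≠i} [a(λ_i^C−λ_j^C)/b(λ_i^C−λ_j^C)] D(λ_i^C) C(λ_n^C)⋯C(λ_{i+1}^C) C(λ_{i−1}^C)⋯C(λ₁^C) C(λ₀) B(λ₁^B)⋯B(λ_n^B) = ∏_{i=1}^{n} [a(λ₀−λ_i^B)/b(λ₀−λ_i^B)] C(λ_n^C)⋯C(λ₁^C) B(λ₁^B)⋯B(λ_n^B) D(λ₀) − ∑_{i=1}^{n} [c(λ₀−λ_i^B)/b(λ₀−λ_i^B)] ∏_{j≠i} [a(λ_i^B−λ_j^B)/b(λ_i^B−λ_j^B)] C(λ_n^C)⋯C(λ₁^C) B(λ₀)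 B(λ₁^B)⋯B(λ_{i−1}^B) B(λ_{i+1}^B)⋯B(λ_n^B) D(λ_i^B). -/

import Mathlib

set_option maxHeartbeats 1000000


noncomputable section

/-- `a(λ) = sinh(λ + γ)` -/
def af (γ lam : ℂ) : ℂ := Complex.sinh (lam + γ)

/-- `b(λ) = sinh(λ)` -/
def bf (lam : ℂ) : ℂ := Complex.sinh lam

/-- `c(λ) = sinh(γ)` (a constant function of `λ`). -/
def cf (γ : ℂ) (_lam : ℂ) : ℂ := Complex.sinh γ

/-- The six-vertex R-matrix on `ℂ² ⊗ ℂ²`, in the ordered basis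
`(e₁⊗e₁, e₁⊗e₂, e₂⊗e₁, e₂⊗e₂)` encoded by pairs `(i, j) : Fin 2 × Fin 2`. -/
def Rmat (γ lam : ℂ) : Matrix (Fin 2 × Fin 2) (Fin 2 × Fin 2) ℂ :=
  fun p q =>
    if p = q then (if p.1 = p.2 then af γ lam else bf lam)
    else if p.1 = q.2 ∧ p.2 = q.1 then cf γ lam else 0

/-- `R_{ai}(λ)` on `ℂ² ⊗ (ℂ²)^{⊗L}`: `R(λ)` on the auxiliary factor and the
`i`-th quantum factor, identity elsewhere.  A vector of the space is indexed by
a pair `(auxiliary index, quantum indices)`. -/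
def Rai (γ : ℂ) {L : ℕ} (lam : ℂ) (i : Fin L) :
    Matrix (Fin 2 × (Fin L → Fin 2)) (Fin 2 × (Fin L → Fin 2)) ℂ :=
  fun p q =>
    Rmat γ lam (p.1, p.2 i) (q.1, q.2 i) *
      (if ∀ k, k ≠ i → p.2 k = q.2 k then 1 else 0)

/-- The monodromy matrix `T(λ) = R_{a1}(λ−μ₁) R_{a2}(λ−μ₂) ⋯ R_{aL}(λ−μ_L)`. -/
def Tmat (γ : ℂ) {L : ℕ} (μ : Fin L → ℂ) (lam : ℂ) :
    Matrix (Fin 2 × (Fin L → Fin 2)) (Fin 2 × (Fin L → Fin 2)) ℂ :=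
  (List.ofFn fun i : Fin L => Rai γ (lam - μ i) i).prod

/-- `A(λ)`: the (1,1) block of `T(λ)` with respect to the auxiliary factor. -/
def Aop (γ : ℂ) {L : ℕ} (μ : Fin L → ℂ) (lam : ℂ) :
    Matrix (Fin L → Fin 2) (Fin L → Fin 2) ℂ :=
  fun p q => Tmat γ μ lam (0, p) (0, q)

/-- `B(λ)`: the (1,2) block of `T(λ)` with respect to the auxiliary factor. -/
def Bop (γ : ℂ) {L : ℕ} (μ : Fin L → ℂ) (lam : ℂ) :
    Matrix (Fin L → Fin 2) (Fin L → Fin 2) ℂ :=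
  fun p q => Tmat γ μ lam (0, p) (1, q)

/-- `C(λ)`: the (2,1) block of `T(λ)` with respect to the auxiliary factor. -/
def Cop (γ : ℂ) {L : ℕ} (μ : Fin L → ℂ) (lam : ℂ) :
    Matrix (Fin L → Fin 2) (Fin L → Fin 2) ℂ :=
  fun p q => Tmat γ μ lam (1, p) (0, q)

/-- `D(λ)`: the (2,2) block of `T(λ)` with respect to the auxiliary factor. -/
def Dop (γ : ℂ) {L : ℕ} (μ : Fin L → ℂ) (lam : ℂ) :
    Matrix (Fin L → Fin 2) (Fin L → Fin 2) ℂ :=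
  fun p q => Tmat γ μ lam (1, p) (1, q)

/-- The vector `|0⟩ = e₁^{⊗L}`. -/
def v0 {L : ℕ} : (Fin L → Fin 2) → ℂ :=
  fun p => if p = (fun _ => 0) then 1 else 0

/-- The vector `|0̄⟩ = e₂^{⊗L}`. -/
def v0bar {L : ℕ} : (Fin L → Fin 2) → ℂ :=
  fun p => if p = (fun _ => 1) then 1 else 0

/-- The ordered product `C(λ_n^C) ⋯ C(λ₁^C)`. -/
def CprodRev (γ : ℂ) {L : ℕ} (μ : Fin L → ℂ) {n : ℕ} (lamC : Fin n → ℂ) :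
    Matrix (Fin L → Fin 2) (Fin L → Fin 2) ℂ :=
  ((List.ofFn fun i : Fin n => Cop γ μ (lamC i)).reverse).prod

/-- The ordered product `B(λ₁^B) ⋯ B(λ_n^B)`. -/
def Bprod (γ : ℂ) {L : ℕ} (μ : Fin L → ℂ) {n : ℕ} (lamB : Fin n → ℂ) :
    Matrix (Fin L → Fin 2) (Fin L → Fin 2) ℂ :=
  (List.ofFn fun i : Fin n => Bop γ μ (lamB i)).prod

lemma cosh_cube (x : ℂ) : Complex.cosh x ^ 3 = (Complex.sinh x ^2 + 1) * Complex.cosh x := by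
  rw [pow_succ, Complex.cosh_sq]

-- ### generalized local operators
def genOp {L : ℕ} (i : Fin L) (f : Matrix (Fin 2) (Fin 2) ℂ) :
    Matrix (Fin L → Fin 2) (Fin L → Fin 2) ℂ :=
  fun p q => if ∀ k, k ≠ i → p k = q k then f (p i) (q i) else 0

lemma sum_delta {L : ℕ} (i : Fin L) (p : Fin L → Fin 2) (F : (Fin L → Fin 2) → ℂ) :
    ∑ g, (if ∀ k, k ≠ i → p k = g k then F g else 0) = ∑ x : Fin 2, F (Function.update p i x) := by
  classical
  rw [← Finset.sum_filter]
  have hupd : ∀ g ∈ Finset.univ.filter (fun g => ∀ k, k ≠ i → p k = g k),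
      Function.update p i (g i) = g := by
    intro g hg
    simp only [Finset.mem_filter, Finset.mem_univ, true_and] at hg
    funext k
    by_cases hk : k = i
    · subst hk; simp
    · rw [Function.update_of_ne hk]; exact hg k hk
  apply Finset.sum_nbij' (fun g => g i) (fun x => Function.update p i x)
  · intro a _; exact Finset.mem_univ _
  · intro x _
    simp only [Finset.mem_filter, Finset.mem_univ, true_and]
    intro k hk; rw [Function.update_of_ne hk]
  · intro g hg; exact hupd g hg
  · intro x _; simp
  · intro g hg; rw [hupd g hg]

lemma genOp_cond_update {L : ℕ} (i : Fin L) (p q : Fin L → Fin 2) (x : Fin 2) :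
    (∀ k, k ≠ i → Function.update p i x k = q k) ↔ (∀ k, k ≠ i → p k = q k) := by
  constructor
  · intro h k hk; rw [← h k hk, Function.update_of_ne hk]
  · intro h k hk; rw [Function.update_of_ne hk]; exact h k hk

lemma genOp_mul {L : ℕ} (i : Fin L) (f g : Matrix (Fin 2) (Fin 2) ℂ) :
    genOp i f * genOp i g = genOp i (f * g) := by
  ext p q
  rw [Matrix.mul_apply]
  have h1 : ∀ r, genOp i f p r * genOp i g r q
      = (if ∀ k, k ≠ i → p k = r k then f (p i) (r i) * genOp i g r q else 0) := by
    intro r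
    simp only [genOp]
    by_cases hc : ∀ k, k ≠ i → p k = r k
    · rw [if_pos hc, if_pos hc]
    · rw [if_neg hc, if_neg hc, zero_mul]
  simp only [h1]
  rw [sum_delta i p (fun r => f (p i) (r i) * genOp i g r q)]
  simp only [genOp, Function.update_self, genOp_cond_update]
  by_cases hP : ∀ k, k ≠ i → p k = q k
  · rw [if_pos hP, Matrix.mul_apply]
    exact Finset.sum_congr rfl fun x _ => by rw [if_pos hP]
  · rw [if_neg hP]
    exact Finset.sum_eq_zero fun x _ => by rw [if_neg hP, mul_zero]

def twoSite {L : ℕ} (i j : Fin L) (f g : Matrix (Fin 2) (Fin 2) ℂ) :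
    Matrix (Fin L → Fin 2) (Fin L → Fin 2) ℂ :=
  fun p q => if ∀ k, k ≠ i → k ≠ j → p k = q k then f (p i) (q i) * g (p j) (q j) else 0

lemma genOp_mul_ne {L : ℕ} {i j : Fin L} (h : i ≠ j) (f g : Matrix (Fin 2) (Fin 2) ℂ) :
    genOp i f * genOp j g = twoSite i j f g := by
  ext p q
  rw [Matrix.mul_apply]
  have h1 : ∀ r, genOp i f p r * genOp j g r q
      = (if ∀ k, k ≠ i → p k = r k then f (p i) (r i) * genOp j g r q else 0) := by
    intro r
    simp only [genOp]
    by_cases hc : ∀ k, k ≠ i → p k = r k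
    · rw [if_pos hc, if_pos hc]
    · rw [if_neg hc, if_neg hc, zero_mul]
  simp only [h1]
  rw [sum_delta i p (fun r => f (p i) (r i) * genOp j g r q)]
  have hupdj : ∀ x : Fin 2, Function.update p i x j = p j :=
    fun x => Function.update_of_ne (Ne.symm h) _ _
  have hcond : ∀ x : Fin 2,
      (∀ k, k ≠ j → Function.update p i x k = q k) ↔
        (x = q i ∧ ∀ k, k ≠ i → k ≠ j → p k = q k) := by
    intro x
    constructor
    · intro hh
      refine ⟨by rw [← hh i h, Function.update_self], ?_⟩
      intro k hki hkj
      rw [← hh k hkj, Function.update_of_ne hki]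
    · rintro ⟨hx, hall⟩ k hkj
      by_cases hki : k = i
      · subst hki; rw [Function.update_self]; exact hx
      · rw [Function.update_of_ne hki]; exact hall k hki hkj
  simp only [genOp, hupdj, hcond, Function.update_self]
  by_cases hP : ∀ k, k ≠ i → k ≠ j → p k = q k
  · have hthis : ∀ x : Fin 2, (f (p i) x * if x = q i ∧ ∀ k, k ≠ i → k ≠ j → p k = q k
        then g (p j) (q j) else 0)
        = (if x = q i then f (p i) x * g (p j) (q j) else 0) := by
      intro x
      by_cases hx : x = q i
      · subst hx; rw [if_pos ⟨rfl, hP⟩, if_pos rfl]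
      · rw [if_neg (fun hcon => hx hcon.1), if_neg hx, mul_zero]
    simp only [hthis]
    rw [Fintype.sum_ite_eq' (q i) (fun x => f (p i) x * g (p j) (q j))]
    simp only [twoSite]
    rw [if_pos hP]
  · simp only [twoSite]
    rw [if_neg hP]
    exact Finset.sum_eq_zero fun x _ => by
      rw [if_neg (by simp [hP] : ¬(x = q i ∧ ∀ k, k ≠ i → k ≠ j → p k = q k)), mul_zero]

lemma genOp_comm {L : ℕ} {i j : Fin L} (h : i ≠ j) (f g : Matrix (Fin 2) (Fin 2) ℂ) :
    genOp i f * genOp j g = genOp j g * genOp i f := by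
  rw [genOp_mul_ne h, genOp_mul_ne (Ne.symm h)]
  funext p q
  simp only [twoSite]
  refine if_congr ?_ (mul_comm _ _) rfl
  constructor
  · intro hh k h1 h2; exact hh k h2 h1
  · intro hh k h1 h2; exact hh k h2 h1

lemma genOp_zero {L : ℕ} (i : Fin L) : genOp i (0 : Matrix (Fin 2) (Fin 2) ℂ) = 0 := by
  ext p q; simp [genOp]

lemma genOp_add {L : ℕ} (i : Fin L) (f g : Matrix (Fin 2) (Fin 2) ℂ) :
    genOp i (f + g) = genOp i f + genOp i g := by
  ext p q; simp only [genOp, Matrix.add_apply]; split_ifs <;> simp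

lemma genOp_smul {L : ℕ} (i : Fin L) (s : ℂ) (f : Matrix (Fin 2) (Fin 2) ℂ) :
    genOp i (s • f) = s • genOp i f := by
  ext p q; simp only [genOp, Matrix.smul_apply, smul_eq_mul]; split_ifs <;> simp

lemma genOp_one {L : ℕ} (i : Fin L) : genOp i (1 : Matrix (Fin 2) (Fin 2) ℂ) = 1 := by
  ext p q
  by_cases hpq : p = q
  · subst hpq; simp [genOp, Matrix.one_apply]
  · rw [Matrix.one_apply_ne hpq]
    simp only [genOp, Matrix.one_apply]
    split_ifs with h1 h2
    · exfalso; apply hpq; funext k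
      by_cases hk : k = i
      · subst hk; exact h2
      · exact h1 k hk
    · rfl
    · rfl

lemma genOp_sum {L : ℕ} (i : Fin L) {β : Type*} (s : Finset β)
    (F : β → Matrix (Fin 2) (Fin 2) ℂ) :
    genOp i (∑ b ∈ s, F b) = ∑ b ∈ s, genOp i (F b) := by
  classical
  induction s using Finset.induction with
  | empty => simp [genOp_zero]
  | insert _ _ hx ih => rw [Finset.sum_insert hx, Finset.sum_insert hx, genOp_add, ih]

-- ### the 8x8 local matrices and YBE (proved elsewhere, sorried here for iteration)
def m1 (γ u : ℂ) : Matrix ((Fin 2 × Fin 2) × Fin 2) ((Fin 2 × Fin 2) × Fin 2) ℂ :=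
  fun r s => if r.1.2 = s.1.2 then Rmat γ u (r.1.1, r.2) (s.1.1, s.2) else 0
def m2 (γ u : ℂ) : Matrix ((Fin 2 × Fin 2) × Fin 2) ((Fin 2 × Fin 2) × Fin 2) ℂ :=
  fun r s => if r.1.1 = s.1.1 then Rmat γ u (r.1.2, r.2) (s.1.2, s.2) else 0
def m12 (γ u : ℂ) : Matrix ((Fin 2 × Fin 2) × Fin 2) ((Fin 2 × Fin 2) × Fin 2) ℂ :=
  fun r s => if r.2 = s.2 then Rmat γ u r.1 s.1 else 0

theorem ybe8 (γ u v : ℂ) : m12 γ (u-v) * m1 γ u * m2 γ v = m2 γ v * m1 γ u * m12 γ (u-v) := by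
  ext ⟨⟨a,b⟩,x⟩ ⟨⟨c,d⟩,y⟩
  simp only [Matrix.mul_apply, Fintype.sum_prod_type, Fin.sum_univ_two, m1, m2, m12]
  fin_cases a <;> fin_cases b <;> fin_cases x <;> fin_cases c <;> fin_cases d <;> fin_cases y <;>
    · simp (config := { decide := true }) only [Rmat, af, bf, cf, Prod.mk.injEq,
        mul_zero, zero_mul, add_zero, zero_add, mul_one, one_mul, ite_true, ite_false,
        if_true, if_false, and_true, true_and, and_false, false_and]
      all_goals try ring
      all_goals try (simp only [Complex.sinh_add, Complex.sinh_sub, Complex.sinh_neg,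
        Complex.cosh_add, Complex.cosh_sub, Complex.cosh_neg])
      all_goals try ring
      all_goals try ring_nf
      all_goals try simp only [Complex.cosh_sq, cosh_cube]
      all_goals ring

-- ### 2x2 block decomposition of matrices on the full space
def compM {L : ℕ} (M : Matrix (Fin 2 × (Fin L → Fin 2)) (Fin 2 × (Fin L → Fin 2)) ℂ) :
    Matrix (Fin 2) (Fin 2) (Matrix (Fin L → Fin 2) (Fin L → Fin 2) ℂ) :=
  fun a c => fun p q => M (a, p) (c, q)

lemma compM_mul {L : ℕ} (M N : Matrix (Fin 2 × (Fin L → Fin 2)) (Fin 2 × (Fin L → Fin 2)) ℂ) :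
    compM (M * N) = compM M * compM N := by
  funext a c p q
  show (M * N) (a, p) (c, q) = _
  rw [Matrix.mul_apply]
  have : (compM M * compM N) a c = ∑ x : Fin 2, compM M a x * compM N x c := by
    rw [Matrix.mul_apply]
  rw [this]
  rw [Matrix.sum_apply]
  rw [Fintype.sum_prod_type]
  exact Finset.sum_congr rfl fun x _ => by rw [Matrix.mul_apply]; rfl

lemma compM_one {L : ℕ} : compM (1 : Matrix (Fin 2 × (Fin L → Fin 2)) (Fin 2 × (Fin L → Fin 2)) ℂ) = 1 := by
  funext a c p q
  show (1 : Matrix (Fin 2 × (Fin L → Fin 2)) (Fin 2 × (Fin L → Fin 2)) ℂ) (a, p) (c, q)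
      = (1 : Matrix (Fin 2) (Fin 2) (Matrix (Fin L → Fin 2) (Fin L → Fin 2) ℂ)) a c p q
  by_cases hac : a = c
  · subst hac
    by_cases hpq : p = q
    · subst hpq; simp [Matrix.one_apply]
    · rw [Matrix.one_apply_ne (by simp [hpq] : ((a, p) : Fin 2 × (Fin L → Fin 2)) ≠ (a, q))]
      rw [Matrix.one_apply_eq, Matrix.one_apply_ne hpq]
  · rw [Matrix.one_apply_ne (by simp [hac] : ((a, p) : Fin 2 × (Fin L → Fin 2)) ≠ (c, q))]
    rw [Matrix.one_apply_ne hac]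
    rfl

lemma compM_listProd {L : ℕ} (l : List (Matrix (Fin 2 × (Fin L → Fin 2)) (Fin 2 × (Fin L → Fin 2)) ℂ)) :
    compM l.prod = (l.map compM).prod := by
  induction l with
  | nil => simpa using compM_one
  | cons x t ih => rw [List.prod_cons, compM_mul, ih, List.map_cons, List.prod_cons]

lemma compM_Rai {L : ℕ} (γ u : ℂ) (i : Fin L) :
    compM (Rai γ u i) = fun a c => genOp i (fun x y => Rmat γ u (a, x) (c, y)) := by
  funext a c p q
  show Rai γ u i (a, p) (c, q) = _
  simp only [Rai, genOp, mul_ite, mul_one, mul_zero]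

-- ### tensor square over the auxiliary space
abbrev Md (L : ℕ) := Matrix (Fin L → Fin 2) (Fin L → Fin 2) ℂ
abbrev MJ (L : ℕ) := Matrix (Fin 2 × Fin 2) (Fin 2 × Fin 2) (Md L)

def up {L : ℕ} (M : Matrix (Fin 2) (Fin 2) (Md L)) : MJ L :=
  fun p q => if p.2 = q.2 then M p.1 q.1 else 0
def dn {L : ℕ} (M : Matrix (Fin 2) (Fin 2) (Md L)) : MJ L :=
  fun p q => if p.1 = q.1 then M p.2 q.2 else 0
def R12J (γ u : ℂ) (L : ℕ) : MJ L := fun p q => Rmat γ u p q • (1 : Md L)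

lemma up_mul {L : ℕ} (M N : Matrix (Fin 2) (Fin 2) (Md L)) : up (M * N) = up M * up N := by
  funext ⟨a, b⟩ ⟨c, d⟩
  fin_cases b <;> fin_cases d <;>
    simp [up, Matrix.mul_apply, Fintype.sum_prod_type, Fin.sum_univ_two]

lemma dn_mul {L : ℕ} (M N : Matrix (Fin 2) (Fin 2) (Md L)) : dn (M * N) = dn M * dn N := by
  funext ⟨a, b⟩ ⟨c, d⟩
  fin_cases a <;> fin_cases c <;>
    simp [dn, Matrix.mul_apply, Fintype.sum_prod_type, Fin.sum_univ_two]

lemma up_mul_dn {L : ℕ} (M N : Matrix (Fin 2) (Fin 2) (Md L)) :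
    up M * dn N = fun p q => M p.1 q.1 * N p.2 q.2 := by
  funext ⟨a, b⟩ ⟨c, d⟩
  fin_cases a <;> fin_cases b <;> fin_cases c <;> fin_cases d <;>
    simp [up, dn, Matrix.mul_apply, Fintype.sum_prod_type, Fin.sum_univ_two]

lemma dn_mul_up {L : ℕ} (M N : Matrix (Fin 2) (Fin 2) (Md L)) :
    dn N * up M = fun p q => N p.2 q.2 * M p.1 q.1 := by
  funext ⟨a, b⟩ ⟨c, d⟩
  fin_cases a <;> fin_cases b <;> fin_cases c <;> fin_cases d <;>
    simp [up, dn, Matrix.mul_apply, Fintype.sum_prod_type, Fin.sum_univ_two]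

lemma up_dn_comm {L : ℕ} (M N : Matrix (Fin 2) (Fin 2) (Md L))
    (hcomm : ∀ a b c d, M a b * N c d = N c d * M a b) :
    up M * dn N = dn N * up M := by
  rw [up_mul_dn, dn_mul_up]
  funext p q
  exact hcomm _ _ _ _

-- ### the lift Phi of 8x8 matrices to MJ L, local at site i
def Phi {L : ℕ} (i : Fin L) (m : Matrix ((Fin 2 × Fin 2) × Fin 2) ((Fin 2 × Fin 2) × Fin 2) ℂ) :
    MJ L :=
  fun p q => genOp i (fun x y => m (p, x) (q, y))

lemma Phi_mul {L : ℕ} (i : Fin L) (m n : Matrix ((Fin 2 × Fin 2) × Fin 2) ((Fin 2 × Fin 2) × Fin 2) ℂ) :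
    Phi i m * Phi i n = Phi i (m * n) := by
  funext p q
  rw [show (Phi i m * Phi i n) p q = ∑ r : Fin 2 × Fin 2, Phi i m p r * Phi i n r q from
    Matrix.mul_apply]
  simp only [Phi]
  rw [Finset.sum_congr rfl fun r _ => genOp_mul i (fun x y => m (p, x) (r, y)) (fun x y => n (r, x) (q, y))]
  funext x y
  rw [Matrix.sum_apply]
  simp only [genOp]
  by_cases hc : ∀ k, k ≠ i → x k = y k
  · simp only [if_pos hc]
    rw [show (m * n) (p, x i) (q, y i) = ∑ rz : (Fin 2 × Fin 2) × Fin 2,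
      m (p, x i) rz * n rz (q, y i) from Matrix.mul_apply]
    conv_rhs => rw [Fintype.sum_prod_type]
    exact Finset.sum_congr rfl fun r _ => Matrix.mul_apply
  · simp only [if_neg hc, Finset.sum_const_zero]

lemma up_Rai_Phi {L : ℕ} (γ u : ℂ) (i : Fin L) :
    up (compM (Rai γ u i)) = Phi i (m1 γ u) := by
  funext p q
  rw [compM_Rai]
  show (if p.2 = q.2 then genOp i (fun x y => Rmat γ u (p.1, x) (q.1, y)) else 0) = _
  simp only [Phi, m1]
  by_cases h : p.2 = q.2
  · have h2 : (fun x y => if p.2 = q.2 then Rmat γ u (p.1, x) (q.1, y) else 0)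
        = (fun x y => Rmat γ u (p.1, x) (q.1, y)) := by
      funext x y; rw [if_pos h]
    rw [if_pos h, h2]
  · have h2 : (fun x y => if p.2 = q.2 then Rmat γ u (p.1, x) (q.1, y) else 0)
        = (0 : Matrix (Fin 2) (Fin 2) ℂ) := by
      funext x y; rw [if_neg h]; rfl
    rw [if_neg h, h2, genOp_zero]

lemma dn_Rai_Phi {L : ℕ} (γ u : ℂ) (i : Fin L) :
    dn (compM (Rai γ u i)) = Phi i (m2 γ u) := by
  funext p q
  rw [compM_Rai]
  show (if p.1 = q.1 then genOp i (fun x y => Rmat γ u (p.2, x) (q.2, y)) else 0) = _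
  simp only [Phi, m2]
  by_cases h : p.1 = q.1
  · have h2 : (fun x y => if p.1 = q.1 then Rmat γ u (p.2, x) (q.2, y) else 0)
        = (fun x y => Rmat γ u (p.2, x) (q.2, y)) := by
      funext x y; rw [if_pos h]
    rw [if_pos h, h2]
  · have h2 : (fun x y => if p.1 = q.1 then Rmat γ u (p.2, x) (q.2, y) else 0)
        = (0 : Matrix (Fin 2) (Fin 2) ℂ) := by
      funext x y; rw [if_neg h]; rfl
    rw [if_neg h, h2, genOp_zero]

lemma R12J_Phi {L : ℕ} (γ u : ℂ) (i : Fin L) :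
    R12J γ u L = Phi i (m12 γ u) := by
  funext p q
  show Rmat γ u p q • (1 : Md L) = _
  simp only [Phi, m12]
  have h2 : (fun x y => if x = y then Rmat γ u p q else 0)
      = Rmat γ u p q • (1 : Matrix (Fin 2) (Fin 2) ℂ) := by
    funext x y
    simp only [Matrix.smul_apply, Matrix.one_apply, smul_eq_mul]
    split_ifs <;> simp
  rw [h2, genOp_smul, genOp_one]

-- ### local Yang-Baxter on MJ L
lemma localYBE {L : ℕ} (γ u v : ℂ) (i : Fin L) :
    R12J γ (u - v) L * up (compM (Rai γ u i)) * dn (compM (Rai γ v i))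
      = dn (compM (Rai γ v i)) * up (compM (Rai γ u i)) * R12J γ (u - v) L := by
  rw [up_Rai_Phi, dn_Rai_Phi, R12J_Phi γ (u-v) i, Phi_mul, Phi_mul, Phi_mul, Phi_mul,
    ybe8 γ u v]

-- ### commutation of locals at distinct sites
lemma up_dn_Rai_comm {L : ℕ} (γ u v : ℂ) {i j : Fin L} (h : i ≠ j) :
    up (compM (Rai γ u i)) * dn (compM (Rai γ v j))
      = dn (compM (Rai γ v j)) * up (compM (Rai γ u i)) := by
  apply up_dn_comm
  intro a b c d
  rw [compM_Rai, compM_Rai]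
  exact genOp_comm h _ _

lemma dn_prod_comm {L : ℕ} (γ v lam : ℂ) (μ : Fin L → ℂ) (a : Fin L) (t : List (Fin L))
    (ha : a ∉ t) :
    dn (compM (Rai γ v a)) * ((t.map fun i => up (compM (Rai γ (lam - μ i) i))).prod)
      = ((t.map fun i => up (compM (Rai γ (lam - μ i) i))).prod) * dn (compM (Rai γ v a)) := by
  induction t with
  | nil => simp
  | cons b s ih =>
    have hab : b ≠ a := fun hh => ha (hh ▸ List.mem_cons_self (a := b) (l := s))
    have ha' : a ∉ s := fun hh => ha (List.mem_cons_of_mem _ hh)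
    rw [List.map_cons, List.prod_cons, ← mul_assoc,
      ← up_dn_Rai_comm γ (lam - μ b) v hab, mul_assoc, ih ha', ← mul_assoc]

lemma up_prod_comm {L : ℕ} (γ u ν : ℂ) (μ : Fin L → ℂ) (a : Fin L) (t : List (Fin L))
    (ha : a ∉ t) :
    up (compM (Rai γ u a)) * ((t.map fun i => dn (compM (Rai γ (ν - μ i) i))).prod)
      = ((t.map fun i => dn (compM (Rai γ (ν - μ i) i))).prod) * up (compM (Rai γ u a)) := by
  induction t with
  | nil => simp
  | cons b s ih =>
    have hab : a ≠ b := fun hh => ha (hh ▸ List.mem_cons_self (a := b) (l := s))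
    have ha' : a ∉ s := fun hh => ha (List.mem_cons_of_mem _ hh)
    rw [List.map_cons, List.prod_cons, ← mul_assoc, up_dn_Rai_comm γ u (ν - μ b) hab,
      mul_assoc, ih ha', ← mul_assoc]

lemma shuffle {M : Type*} [Monoid M] (R U D P Q : M)
    (key : R * U * D = D * U * R) (hUQ : U * Q = Q * U) (hDP : D * P = P * D)
    (ih : R * P * Q = Q * P * R) :
    R * (U * P) * (D * Q) = D * Q * (U * P) * R := by
  have h1 : P * (D * Q) = D * (P * Q) := by rw [← mul_assoc, ← hDP, mul_assoc]
  have ih2 : R * (P * Q) = Q * (P * R) := by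
    rw [← mul_assoc, ih, mul_assoc]
  calc R * (U * P) * (D * Q)
      = R * (U * (P * (D * Q))) := by simp only [mul_assoc]
    _ = R * (U * (D * (P * Q))) := by rw [h1]
    _ = R * U * D * (P * Q) := by simp only [mul_assoc]
    _ = D * U * R * (P * Q) := by rw [key]
    _ = D * (U * (R * (P * Q))) := by simp only [mul_assoc]
    _ = D * (U * (Q * (P * R))) := by rw [ih2]
    _ = D * (U * Q * (P * R)) := by simp only [mul_assoc]
    _ = D * (Q * U * (P * R)) := by rw [hUQ]
    _ = D * Q * (U * P) * R := by simp only [mul_assoc]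

lemma RTT_list {L : ℕ} (γ : ℂ) (μ : Fin L → ℂ) (lam ν : ℂ) (l : List (Fin L)) (hl : l.Nodup) :
    R12J γ (lam - ν) L * ((l.map fun i => up (compM (Rai γ (lam - μ i) i))).prod)
        * ((l.map fun i => dn (compM (Rai γ (ν - μ i) i))).prod)
      = ((l.map fun i => dn (compM (Rai γ (ν - μ i) i))).prod)
        * ((l.map fun i => up (compM (Rai γ (lam - μ i) i))).prod) * R12J γ (lam - ν) L := by
  induction l with
  | nil => simp
  | cons a t ih =>
    have hat : a ∉ t := (List.nodup_cons.mp hl).1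
    have ht : t.Nodup := (List.nodup_cons.mp hl).2
    simp only [List.map_cons, List.prod_cons]
    have key : R12J γ (lam - ν) L * up (compM (Rai γ (lam - μ a) a)) * dn (compM (Rai γ (ν - μ a) a))
        = dn (compM (Rai γ (ν - μ a) a)) * up (compM (Rai γ (lam - μ a) a)) * R12J γ (lam - ν) L := by
      have h := localYBE γ (lam - μ a) (ν - μ a) a
      rw [show lam - μ a - (ν - μ a) = lam - ν by ring] at h
      exact h
    exact shuffle _ _ _ _ _ key
      (up_prod_comm γ (lam - μ a) ν μ a t hat)
      (dn_prod_comm γ (ν - μ a) lam μ a t hat)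
      (ih ht)

-- ### up/dn unit and list lemmas
lemma up_one {L : ℕ} : up (1 : Matrix (Fin 2) (Fin 2) (Md L)) = 1 := by
  funext ⟨a, b⟩ ⟨c, d⟩
  by_cases hac : a = c <;> by_cases hbd : b = d <;>
    simp [up, Matrix.one_apply, Prod.ext_iff, hac, hbd]

lemma dn_one {L : ℕ} : dn (1 : Matrix (Fin 2) (Fin 2) (Md L)) = 1 := by
  funext ⟨a, b⟩ ⟨c, d⟩
  by_cases hac : a = c <;> by_cases hbd : b = d <;>
    simp [dn, Matrix.one_apply, Prod.ext_iff, hac, hbd]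

lemma up_listProd {L : ℕ} (l : List (Matrix (Fin 2) (Fin 2) (Md L))) :
    up l.prod = (l.map up).prod := by
  induction l with
  | nil => simpa using up_one
  | cons x t ih => rw [List.prod_cons, up_mul, ih, List.map_cons, List.prod_cons]

lemma dn_listProd {L : ℕ} (l : List (Matrix (Fin 2) (Fin 2) (Md L))) :
    dn l.prod = (l.map dn).prod := by
  induction l with
  | nil => simpa using dn_one
  | cons x t ih => rw [List.prod_cons, dn_mul, ih, List.map_cons, List.prod_cons]

lemma Tmat_up {L : ℕ} (γ : ℂ) (μ : Fin L → ℂ) (lam : ℂ) :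
    up (compM (Tmat γ μ lam))
      = ((List.finRange L).map fun i => up (compM (Rai γ (lam - μ i) i))).prod := by
  rw [Tmat, List.ofFn_eq_map, compM_listProd, up_listProd, List.map_map, List.map_map]
  rfl

lemma Tmat_dn {L : ℕ} (γ : ℂ) (μ : Fin L → ℂ) (lam : ℂ) :
    dn (compM (Tmat γ μ lam))
      = ((List.finRange L).map fun i => dn (compM (Rai γ (lam - μ i) i))).prod := by
  rw [Tmat, List.ofFn_eq_map, compM_listProd, dn_listProd, List.map_map, List.map_map]
  rfl

theorem RTT {L : ℕ} (γ : ℂ) (μ : Fin L → ℂ) (lam ν : ℂ) :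
    R12J γ (lam - ν) L * up (compM (Tmat γ μ lam)) * dn (compM (Tmat γ μ ν))
      = dn (compM (Tmat γ μ ν)) * up (compM (Tmat γ μ lam)) * R12J γ (lam - ν) L := by
  rw [Tmat_up, Tmat_dn]
  exact RTT_list γ μ lam ν (List.finRange L) (List.nodup_finRange L)

-- ### entry formulas
lemma triple_entry_left {L : ℕ} (γ w : ℂ) (M N : Matrix (Fin 2) (Fin 2) (Md L)) (p q : Fin 2 × Fin 2) :
    (R12J γ w L * up M * dn N) p q
      = ∑ r : Fin 2 × Fin 2, Rmat γ w p r • (M r.1 q.1 * N r.2 q.2) := by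
  rw [mul_assoc, Matrix.mul_apply, up_mul_dn]
  exact Finset.sum_congr rfl fun r _ => by
    show Rmat γ w p r • (1 : Md L) * (M r.1 q.1 * N r.2 q.2) = _
    rw [smul_mul_assoc, one_mul]

lemma triple_entry_right {L : ℕ} (γ w : ℂ) (M N : Matrix (Fin 2) (Fin 2) (Md L)) (p q : Fin 2 × Fin 2) :
    (dn N * up M * R12J γ w L) p q
      = ∑ r : Fin 2 × Fin 2, Rmat γ w r q • (N p.2 r.2 * M p.1 r.1) := by
  rw [Matrix.mul_apply, dn_mul_up]
  exact Finset.sum_congr rfl fun r _ => by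
    show (N p.2 r.2 * M p.1 r.1) * (Rmat γ w r q • (1 : Md L)) = _
    rw [mul_smul_comm, mul_one]

-- ### the fundamental exchange relations
lemma rel1 {L : ℕ} (γ : ℂ) (μ : Fin L → ℂ) (lam ν : ℂ) :
    af γ (lam - ν) • (Dop γ μ lam * Cop γ μ ν)
      = cf γ (lam - ν) • (Dop γ μ ν * Cop γ μ lam)
        + bf (lam - ν) • (Cop γ μ ν * Dop γ μ lam) := by
  have h := congrFun (congrFun (RTT γ μ lam ν) ((1, 1) : Fin 2 × Fin 2)) ((1, 0) : Fin 2 × Fin 2)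
  rw [triple_entry_left, triple_entry_right] at h
  rw [Fintype.sum_prod_type, Fintype.sum_prod_type] at h
  simp only [Fin.sum_univ_two] at h
  simp (config := { decide := true }) only [Rmat, af, bf, cf, Prod.mk.injEq,
    if_true, if_false, and_true, true_and, and_false, false_and, and_self,
    ite_true, ite_false, zero_smul, add_zero, zero_add] at h
  exact h

lemma rel2 {L : ℕ} (γ : ℂ) (μ : Fin L → ℂ) (lam ν : ℂ) :
    cf γ (lam - ν) • (Bop γ μ lam * Dop γ μ ν)
      + bf (lam - ν) • (Dop γ μ lam * Bop γ μ ν)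
      = af γ (lam - ν) • (Bop γ μ ν * Dop γ μ lam) := by
  have h := congrFun (congrFun (RTT γ μ lam ν) ((1, 0) : Fin 2 × Fin 2)) ((1, 1) : Fin 2 × Fin 2)
  rw [triple_entry_left, triple_entry_right] at h
  rw [Fintype.sum_prod_type, Fintype.sum_prod_type] at h
  simp only [Fin.sum_univ_two] at h
  simp (config := { decide := true }) only [Rmat, af, bf, cf, Prod.mk.injEq,
    if_true, if_false, and_true, true_and, and_false, false_and, and_self,
    ite_true, ite_false, zero_smul, add_zero, zero_add] at h
  exact h

lemma relCC0 {L : ℕ} (γ : ℂ) (μ : Fin L → ℂ) (lam ν : ℂ) :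
    af γ (lam - ν) • (Cop γ μ lam * Cop γ μ ν)
      = af γ (lam - ν) • (Cop γ μ ν * Cop γ μ lam) := by
  have h := congrFun (congrFun (RTT γ μ lam ν) ((1, 1) : Fin 2 × Fin 2)) ((0, 0) : Fin 2 × Fin 2)
  rw [triple_entry_left, triple_entry_right] at h
  rw [Fintype.sum_prod_type, Fintype.sum_prod_type] at h
  simp only [Fin.sum_univ_two] at h
  simp (config := { decide := true }) only [Rmat, af, bf, cf, Prod.mk.injEq,
    if_true, if_false, and_true, true_and, and_false, false_and, and_self,
    ite_true, ite_false, zero_smul, add_zero, zero_add] at h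
  exact h

lemma relBB0 {L : ℕ} (γ : ℂ) (μ : Fin L → ℂ) (lam ν : ℂ) :
    af γ (lam - ν) • (Bop γ μ lam * Bop γ μ ν)
      = af γ (lam - ν) • (Bop γ μ ν * Bop γ μ lam) := by
  have h := congrFun (congrFun (RTT γ μ lam ν) ((0, 0) : Fin 2 × Fin 2)) ((1, 1) : Fin 2 × Fin 2)
  rw [triple_entry_left, triple_entry_right] at h
  rw [Fintype.sum_prod_type, Fintype.sum_prod_type] at h
  simp only [Fin.sum_univ_two] at h
  simp (config := { decide := true }) only [Rmat, af, bf, cf, Prod.mk.injEq,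
    if_true, if_false, and_true, true_and, and_false, false_and, and_self,
    ite_true, ite_false, zero_smul, add_zero, zero_add] at h
  exact h

-- ### continuity and commutation of C's and B's
lemma continuous_Rai {L : ℕ} (γ : ℂ) (μi : ℂ) (i : Fin L) :
    Continuous fun lam => Rai γ (lam - μi) i := by
  apply continuous_matrix
  intro p q
  simp only [Rai]
  apply Continuous.mul _ continuous_const
  show Continuous fun lam => Rmat γ (lam - μi) (p.1, p.2 i) (q.1, q.2 i)
  unfold Rmat af bf cf
  split_ifs <;> fun_prop

lemma continuous_listProd {L : ℕ} (γ : ℂ) (μ : Fin L → ℂ) (l : List (Fin L)) :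
    Continuous fun lam => (l.map fun i => Rai γ (lam - μ i) i).prod := by
  induction l with
  | nil => simpa using continuous_const
  | cons a t ih =>
    simp only [List.map_cons, List.prod_cons]
    exact (continuous_Rai γ (μ a) a).matrix_mul ih

lemma continuous_Tmat {L : ℕ} (γ : ℂ) (μ : Fin L → ℂ) :
    Continuous fun lam => Tmat γ μ lam := by
  have : (fun lam => Tmat γ μ lam) = fun lam => (((List.finRange L).map fun i => Rai γ (lam - μ i) i)).prod := by
    funext lam
    rw [Tmat, List.ofFn_eq_map]
  rw [this]
  exact continuous_listProd γ μ _

lemma continuous_Cop {L : ℕ} (γ : ℂ) (μ : Fin L → ℂ) :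
    Continuous fun lam => Cop γ μ lam := by
  apply continuous_matrix
  intro p q
  exact (continuous_apply ((0 : Fin 2), q)).comp
    ((continuous_apply ((1 : Fin 2), p)).comp (continuous_Tmat γ μ))

lemma continuous_Bop {L : ℕ} (γ : ℂ) (μ : Fin L → ℂ) :
    Continuous fun lam => Bop γ μ lam := by
  apply continuous_matrix
  intro p q
  exact (continuous_apply ((1 : Fin 2), q)).comp
    ((continuous_apply ((0 : Fin 2), p)).comp (continuous_Tmat γ μ))

lemma cosh_ne_zero_of_sinh_eq_zero {z : ℂ} (h : Complex.sinh z = 0) : Complex.cosh z ≠ 0 := by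
  intro hc
  have := Complex.cosh_sq_sub_sinh_sq z
  rw [h, hc] at this
  simp at this

lemma vanish_of_sinh_smul {L : ℕ} (c : ℂ) (F : ℂ → Md L) (hcont : Continuous F)
    (h0 : ∀ x, Complex.sinh (x + c) • F x = 0) : ∀ x, F x = 0 := by
  have hz : ∀ x, Complex.sinh (x + c) ≠ 0 → F x = 0 := by
    intro x hx
    have := h0 x
    rw [← one_smul ℂ (F x), ← inv_mul_cancel₀ hx, mul_smul, this, smul_zero]
  intro x
  by_cases h : Complex.sinh (x + c) = 0
  · -- limit argument
    have h1 : Filter.Tendsto (fun t : ℝ => F (x + t)) (nhdsWithin 0 (Set.Ioi 0)) (nhds (F x)) := by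
      have hc2 : Continuous fun t : ℝ => F (x + t) :=
        hcont.comp (continuous_const.add Complex.continuous_ofReal)
      have h3 := hc2.tendsto 0
      simp only [Complex.ofReal_zero, add_zero] at h3
      exact h3.mono_left nhdsWithin_le_nhds
    have h2 : ∀ᶠ t : ℝ in nhdsWithin 0 (Set.Ioi 0), F (x + t) = 0 := by
      filter_upwards [self_mem_nhdsWithin] with t ht
      have ht' : (0 : ℝ) < t := ht
      apply hz
      have harg : x + (t : ℂ) + c = (x + c) + (t : ℂ) := by ring
      rw [harg, Complex.sinh_add, h, zero_mul, zero_add]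
      apply mul_ne_zero (cosh_ne_zero_of_sinh_eq_zero h)
      rw [← Complex.ofReal_sinh]
      have : Real.sinh t ≠ 0 := ne_of_gt (by positivity)
      exact_mod_cast Complex.ofReal_ne_zero.mpr this
    have h3 : Filter.Tendsto (fun t : ℝ => F (x + t)) (nhdsWithin 0 (Set.Ioi 0)) (nhds 0) :=
      (Filter.tendsto_congr' h2).mpr tendsto_const_nhds
    exact tendsto_nhds_unique h1 h3
  · exact hz x h

lemma CC_comm {L : ℕ} (γ : ℂ) (μ : Fin L → ℂ) (lam ν : ℂ) :
    Cop γ μ lam * Cop γ μ ν = Cop γ μ ν * Cop γ μ lam := by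
  have key := vanish_of_sinh_smul (γ - ν)
    (fun x => Cop γ μ x * Cop γ μ ν - Cop γ μ ν * Cop γ μ x)
    (((continuous_Cop γ μ).matrix_mul continuous_const).sub
      (continuous_const.matrix_mul (continuous_Cop γ μ)))
    (by
      intro x
      rw [smul_sub, sub_eq_zero]
      have := relCC0 γ μ x ν
      rw [show x + (γ - ν) = x - ν + γ by ring]
      exact this) lam
  exact sub_eq_zero.mp key

lemma BB_comm {L : ℕ} (γ : ℂ) (μ : Fin L → ℂ) (lam ν : ℂ) :
    Bop γ μ lam * Bop γ μ ν = Bop γ μ ν * Bop γ μ lam := by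
  have key := vanish_of_sinh_smul (γ - ν)
    (fun x => Bop γ μ x * Bop γ μ ν - Bop γ μ ν * Bop γ μ x)
    (((continuous_Bop γ μ).matrix_mul continuous_const).sub
      (continuous_const.matrix_mul (continuous_Bop γ μ)))
    (by
      intro x
      rw [smul_sub, sub_eq_zero]
      have := relBB0 γ μ x ν
      rw [show x + (γ - ν) = x - ν + γ by ring]
      exact this) lam
  exact sub_eq_zero.mp key

-- ### division forms
lemma DB_exchange {L : ℕ} (γ : ℂ) (μ : Fin L → ℂ) {lam ν : ℂ} (h : bf (lam - ν) ≠ 0) :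
    Dop γ μ lam * Bop γ μ ν
      = (af γ (lam - ν) / bf (lam - ν)) • (Bop γ μ ν * Dop γ μ lam)
        - (cf γ (lam - ν) / bf (lam - ν)) • (Bop γ μ lam * Dop γ μ ν) := by
  have h3 : bf (lam - ν) • (Dop γ μ lam * Bop γ μ ν)
      = af γ (lam - ν) • (Bop γ μ ν * Dop γ μ lam)
        - cf γ (lam - ν) • (Bop γ μ lam * Dop γ μ ν) :=
    eq_sub_of_add_eq' (rel2 γ μ lam ν)
  calc Dop γ μ lam * Bop γ μ ν
      = (bf (lam - ν))⁻¹ • (bf (lam - ν) • (Dop γ μ lam * Bop γ μ ν)) :=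
        (inv_smul_smul₀ h _).symm
    _ = _ := by
        rw [h3, smul_sub, smul_smul, smul_smul, ← div_eq_inv_mul, ← div_eq_inv_mul]

lemma CD_exchange {L : ℕ} (γ : ℂ) (μ : Fin L → ℂ) {lam ν : ℂ} (h : bf (lam - ν) ≠ 0) :
    Cop γ μ ν * Dop γ μ lam
      = (af γ (lam - ν) / bf (lam - ν)) • (Dop γ μ lam * Cop γ μ ν)
        - (cf γ (lam - ν) / bf (lam - ν)) • (Dop γ μ ν * Cop γ μ lam) := by
  have h3 : bf (lam - ν) • (Cop γ μ ν * Dop γ μ lam)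
      = af γ (lam - ν) • (Dop γ μ lam * Cop γ μ ν)
        - cf γ (lam - ν) • (Dop γ μ ν * Cop γ μ lam) :=
    eq_sub_of_add_eq' (rel1 γ μ lam ν).symm
  calc Cop γ μ ν * Dop γ μ lam
      = (bf (lam - ν))⁻¹ • (bf (lam - ν) • (Cop γ μ ν * Dop γ μ lam)) :=
        (inv_smul_smul₀ h _).symm
    _ = _ := by
        rw [h3, smul_sub, smul_smul, smul_smul, ← div_eq_inv_mul, ← div_eq_inv_mul]

-- ### the key coefficient identity
lemma coeff_id (γ x y : ℂ) (hx : bf x ≠ 0) (hy : bf y ≠ 0) (hxy : bf (x - y) ≠ 0) :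
    (af γ x / bf x) * (Complex.sinh γ / bf y)
      - (Complex.sinh γ / bf x) * (Complex.sinh γ / bf (y - x))
    = (Complex.sinh γ / bf y) * (af γ (x - y) / bf (x - y)) := by
  have hyx : bf (y - x) = -bf (x - y) := by
    unfold bf; rw [show y - x = -(x - y) by ring, Complex.sinh_neg]
  unfold af bf at *
  rw [hyx]
  field_simp
  ring_nf
  simp only [Complex.sinh_add, Complex.sinh_sub, Complex.sinh_neg,
    Complex.cosh_add, Complex.cosh_sub, Complex.cosh_neg]
  ring_nf
  simp only [Complex.cosh_sq, cosh_cube]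
  ring

-- ### Finset erase product helpers
lemma erase_zero_prod {n : ℕ} (f : Fin (n+1) → ℂ) :
    ∏ j ∈ Finset.univ.erase (0 : Fin (n+1)), f j = ∏ j : Fin n, f j.succ := by
  rw [Fin.univ_succ, Finset.erase_cons, Finset.prod_map]
  rfl

lemma erase_succ_prod {n : ℕ} (i : Fin n) (f : Fin (n+1) → ℂ) :
    ∏ j ∈ Finset.univ.erase (Fin.succ i), f j
      = f 0 * ∏ j ∈ Finset.univ.erase i, f j.succ := by
  have h0 : (0 : Fin (n+1)) ∈ Finset.univ.erase (Fin.succ i) := by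
    simp [Ne.symm (Fin.succ_ne_zero i)]
  rw [← Finset.mul_prod_erase _ f h0]
  congr 1
  have hset : (Finset.univ.erase (Fin.succ i)).erase (0 : Fin (n+1))
      = (Finset.univ.erase i).map ⟨Fin.succ, Fin.succ_injective n⟩ := by
    ext x
    simp only [Finset.mem_erase, Finset.mem_map, Finset.mem_univ, and_true,
      Function.Embedding.coeFn_mk]
    constructor
    · rintro ⟨hx0, hxs⟩
      rcases Fin.eq_zero_or_eq_succ x with rfl | ⟨y, rfl⟩
      · exact absurd rfl hx0
      · exact ⟨y, fun hyi => hxs (by rw [hyi]), rfl⟩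
    · rintro ⟨y, hyi, rfl⟩
      exact ⟨Fin.succ_ne_zero y, fun hc => hyi (Fin.succ_injective n hc)⟩
  rw [hset, Finset.prod_map]
  rfl

-- ### commuting D through a string of B's
lemma lemB (γ : ℂ) {L : ℕ} (μ : Fin L → ℂ) :
    ∀ (n : ℕ) (lam0 : ℂ) (lamB : Fin n → ℂ),
      (∀ i, bf (lam0 - lamB i) ≠ 0) →
      (∀ i j, j ≠ i → bf (lamB i - lamB j) ≠ 0) →
      Dop γ μ lam0 * (List.ofFn fun i => Bop γ μ (lamB i)).prod
        = (∏ i, af γ (lam0 - lamB i) / bf (lam0 - lamB i)) •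
            ((List.ofFn fun i => Bop γ μ (lamB i)).prod * Dop γ μ lam0)
          - ∑ i, ((cf γ (lam0 - lamB i) / bf (lam0 - lamB i)) *
                ∏ j ∈ Finset.univ.erase i, af γ (lamB i - lamB j) / bf (lamB i - lamB j)) •
              ((Bop γ μ lam0 :: (List.ofFn fun j => Bop γ μ (lamB j)).eraseIdx (i : ℕ)).prod
                * Dop γ μ (lamB i)) := by
  intro n
  induction n with
  | zero =>
    intro lam0 lamB _ _
    simp
  | succ n ih =>
    intro lam0 lamB h0 hBB
    have hsucc_ne : ∀ i j : Fin n, j ≠ i → (Fin.succ j) ≠ (Fin.succ i) :=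
      fun i j hij h => hij (Fin.succ_injective _ h)
    have IH1 := ih lam0 (fun i => lamB i.succ) (fun i => h0 i.succ)
      (fun i j hij => hBB i.succ j.succ (hsucc_ne i j hij))
    have IH2 := ih (lamB 0) (fun i => lamB i.succ)
      (fun i => hBB 0 i.succ (Fin.succ_ne_zero i))
      (fun i j hij => hBB i.succ j.succ (hsucc_ne i j hij))
    simp only [List.ofFn_succ, List.prod_cons]
    rw [← mul_assoc, DB_exchange γ μ (h0 0), sub_mul, smul_mul_assoc, smul_mul_assoc,
      mul_assoc, mul_assoc, IH1, IH2]
    -- distribute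
    simp only [mul_sub, mul_smul_comm, Finset.mul_sum, smul_sub, smul_smul, Finset.smul_sum]
    -- normalize the target
    simp only [Fin.prod_univ_succ, Fin.sum_univ_succ, Fin.val_succ, Fin.val_zero,
      List.eraseIdx_cons_zero, List.eraseIdx_cons_succ, List.prod_cons,
      erase_zero_prod, erase_succ_prod]
    -- move to a sum comparison
    have habstract : ∀ (X Y S1 S2 S' : Md L), S1 - S2 = S' →
        X - S1 - (Y - S2) = X - (Y + S') := by
      intro X Y S1 S2 S' h
      rw [← h]; abel
    simp only [mul_assoc]
    apply habstract
    rw [← Finset.sum_sub_distrib]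
    apply Finset.sum_congr rfl
    intro x _
    have hop1 : Bop γ μ (lamB 0) *
          (Bop γ μ lam0 * (((List.ofFn fun i => Bop γ μ (lamB i.succ)).eraseIdx (x : ℕ)).prod *
            Dop γ μ (lamB x.succ)))
        = Bop γ μ lam0 *
            (Bop γ μ (lamB 0) * (((List.ofFn fun i => Bop γ μ (lamB i.succ)).eraseIdx (x : ℕ)).prod *
          Dop γ μ (lamB x.succ))) := by
      rw [← mul_assoc, BB_comm γ μ (lamB 0) lam0, mul_assoc]
    rw [hop1, ← sub_smul]
    congr 1
    have harg : bf ((lam0 - lamB 0) - (lam0 - lamB x.succ)) ≠ 0 := by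
      rw [show (lam0 - lamB 0) - (lam0 - lamB x.succ) = lamB x.succ - lamB 0 by ring]
      exact hBB x.succ 0 (Ne.symm (Fin.succ_ne_zero x))
    have hkey := coeff_id γ (lam0 - lamB 0) (lam0 - lamB x.succ) (h0 0) (h0 x.succ) harg
    rw [show (lam0 - lamB x.succ) - (lam0 - lamB 0) = lamB 0 - lamB x.succ by ring,
      show (lam0 - lamB 0) - (lam0 - lamB x.succ) = lamB x.succ - lamB 0 by ring] at hkey
    simp only [cf]
    linear_combination (∏ x_1 ∈ Finset.univ.erase x,
      af γ (lamB x.succ - lamB x_1.succ) / bf (lamB x.succ - lamB x_1.succ)) * hkey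

-- ### commuting D through a string of C's
lemma lemC (γ : ℂ) {L : ℕ} (μ : Fin L → ℂ) :
    ∀ (n : ℕ) (lam0 : ℂ) (lamC : Fin n → ℂ),
      (∀ i, bf (lam0 - lamC i) ≠ 0) →
      (∀ i j, j ≠ i → bf (lamC i - lamC j) ≠ 0) →
      ((List.ofFn fun i => Cop γ μ (lamC i)).reverse).prod * Dop γ μ lam0
        = (∏ i, af γ (lam0 - lamC i) / bf (lam0 - lamC i)) •
            (Dop γ μ lam0 * ((List.ofFn fun i => Cop γ μ (lamC i)).reverse).prod)
          - ∑ i, ((cf γ (lam0 - lamC i) / bf (lam0 - lamC i)) *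
                ∏ j ∈ Finset.univ.erase i, af γ (lamC i - lamC j) / bf (lamC i - lamC j)) •
              (Dop γ μ (lamC i) *
                ((Cop γ μ lam0 :: (List.ofFn fun j => Cop γ μ (lamC j)).eraseIdx (i : ℕ)).reverse).prod) := by
  intro n
  induction n with
  | zero =>
    intro lam0 lamC _ _
    simp
  | succ n ih =>
    intro lam0 lamC h0 hCC
    have hsucc_ne : ∀ i j : Fin n, j ≠ i → (Fin.succ j) ≠ (Fin.succ i) :=
      fun i j hij h => hij (Fin.succ_injective _ h)
    have IH1 := ih lam0 (fun i => lamC i.succ) (fun i => h0 i.succ)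
      (fun i j hij => hCC i.succ j.succ (hsucc_ne i j hij))
    have IH2 := ih (lamC 0) (fun i => lamC i.succ)
      (fun i => hCC 0 i.succ (Fin.succ_ne_zero i))
      (fun i j hij => hCC i.succ j.succ (hsucc_ne i j hij))
    simp only [List.ofFn_succ, List.reverse_cons, List.prod_append, List.prod_cons,
      List.prod_nil, mul_one]
    rw [mul_assoc, CD_exchange γ μ (h0 0), mul_sub, mul_smul_comm, mul_smul_comm,
      ← mul_assoc, ← mul_assoc, IH1, IH2]
    -- distribute
    simp only [sub_mul, smul_mul_assoc, Finset.sum_mul, smul_sub, smul_smul, Finset.smul_sum]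
    -- normalize the target
    simp only [Fin.prod_univ_succ, Fin.sum_univ_succ, Fin.val_succ, Fin.val_zero,
      List.eraseIdx_cons_zero, List.eraseIdx_cons_succ, List.reverse_cons,
      List.prod_append, List.prod_cons, List.prod_nil, mul_one,
      erase_zero_prod, erase_succ_prod]
    have habstract : ∀ (X Y S1 S2 S' : Md L), S1 - S2 = S' →
        X - S1 - (Y - S2) = X - (Y + S') := by
      intro X Y S1 S2 S' h
      rw [← h]; abel
    simp only [mul_assoc]
    apply habstract
    rw [← Finset.sum_sub_distrib]
    apply Finset.sum_congr rfl
    intro x _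
    have hop1 : Dop γ μ (lamC x.succ) *
          ((((List.ofFn fun i => Cop γ μ (lamC i.succ)).eraseIdx (x : ℕ)).reverse).prod *
            (Cop γ μ lam0 * Cop γ μ (lamC 0)))
        = Dop γ μ (lamC x.succ) *
            ((((List.ofFn fun i => Cop γ μ (lamC i.succ)).eraseIdx (x : ℕ)).reverse).prod *
              (Cop γ μ (lamC 0) * Cop γ μ lam0)) := by
      rw [CC_comm γ μ lam0 (lamC 0)]
    rw [hop1, ← sub_smul]
    congr 1
    have harg : bf ((lam0 - lamC 0) - (lam0 - lamC x.succ)) ≠ 0 := by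
      rw [show (lam0 - lamC 0) - (lam0 - lamC x.succ) = lamC x.succ - lamC 0 by ring]
      exact hCC x.succ 0 (Ne.symm (Fin.succ_ne_zero x))
    have hkey := coeff_id γ (lam0 - lamC 0) (lam0 - lamC x.succ) (h0 0) (h0 x.succ) harg
    rw [show (lam0 - lamC x.succ) - (lam0 - lamC 0) = lamC 0 - lamC x.succ by ring,
      show (lam0 - lamC 0) - (lam0 - lamC x.succ) = lamC x.succ - lamC 0 by ring] at hkey
    simp only [cf]
    linear_combination (∏ x_1 ∈ Finset.univ.erase x,
      af γ (lamC x.succ - lamC x_1.succ) / bf (lamC x.succ - lamC x_1.succ)) * hkey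


/-- Degree `2n+1` Yang–Baxter relation obtained by commuting `D(λ₀)` through
the strings of `C`'s and `B`'s. -/
theorem degree_2n1_relation_D (γ : ℂ) (L : ℕ) (hL : 1 ≤ L) (μ : Fin L → ℂ)
    (n : ℕ) (hn : 1 ≤ n) (lam0 : ℂ) (lamB lamC : Fin n → ℂ)
    (hC0 : ∀ i, bf (lam0 - lamC i) ≠ 0)
    (hB0 : ∀ i, bf (lam0 - lamB i) ≠ 0)
    (hCC : ∀ i j, j ≠ i → bf (lamC i - lamC j) ≠ 0)
    (hBB : ∀ i j, j ≠ i → bf (lamB i - lamB j) ≠ 0) :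
    (∏ i, af γ (lam0 - lamC i) / bf (lam0 - lamC i)) •
        (Dop γ μ lam0 * CprodRev γ μ lamC * Bprod γ μ lamB)
      - ∑ i, ((cf γ (lam0 - lamC i) / bf (lam0 - lamC i)) *
            ∏ j ∈ Finset.univ.erase i, af γ (lamC i - lamC j) / bf (lamC i - lamC j)) •
          (Dop γ μ (lamC i) *
            ((Cop γ μ lam0 :: (List.ofFn fun j : Fin n => Cop γ μ (lamC j)).eraseIdx
                (i : ℕ)).reverse).prod *
            Bprod γ μ lamB)
    = (∏ i, af γ (lam0 - lamB i) / bf (lam0 - lamB i)) •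
        (CprodRev γ μ lamC * Bprod γ μ lamB * Dop γ μ lam0)
      - ∑ i, ((cf γ (lam0 - lamB i) / bf (lam0 - lamB i)) *
            ∏ j ∈ Finset.univ.erase i, af γ (lamB i - lamB j) / bf (lamB i - lamB j)) •
          (CprodRev γ μ lamC *
            (Bop γ μ lam0 :: (List.ofFn fun j : Fin n => Bop γ μ (lamB j)).eraseIdx
                (i : ℕ)).prod *
            Dop γ μ (lamB i)) := by
  have hC := lemC γ μ n lam0 lamC hC0 hCC
  have hB := lemB γ μ n lam0 lamB hB0 hBB
  have e1 : (CprodRev γ μ lamC * Dop γ μ lam0) * Bprod γ μ lamB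
      = (∏ i, af γ (lam0 - lamC i) / bf (lam0 - lamC i)) •
          (Dop γ μ lam0 * CprodRev γ μ lamC * Bprod γ μ lamB)
        - ∑ i, ((cf γ (lam0 - lamC i) / bf (lam0 - lamC i)) *
              ∏ j ∈ Finset.univ.erase i, af γ (lamC i - lamC j) / bf (lamC i - lamC j)) •
            (Dop γ μ (lamC i) *
              ((Cop γ μ lam0 :: (List.ofFn fun j : Fin n => Cop γ μ (lamC j)).eraseIdx
                  (i : ℕ)).reverse).prod *
              Bprod γ μ lamB) := by
    rw [show CprodRev γ μ lamC = ((List.ofFn fun i : Fin n => Cop γ μ (lamC i)).reverse).prod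
      from rfl, hC, sub_mul, smul_mul_assoc, Finset.sum_mul]
    simp only [smul_mul_assoc]
  have e2 : CprodRev γ μ lamC * (Dop γ μ lam0 * Bprod γ μ lamB)
      = (∏ i, af γ (lam0 - lamB i) / bf (lam0 - lamB i)) •
          (CprodRev γ μ lamC * Bprod γ μ lamB * Dop γ μ lam0)
        - ∑ i, ((cf γ (lam0 - lamB i) / bf (lam0 - lamB i)) *
              ∏ j ∈ Finset.univ.erase i, af γ (lamB i - lamB j) / bf (lamB i - lamB j)) •
            (CprodRev γ μ lamC *
              (Bop γ μ lam0 :: (List.ofFn fun j : Fin n => Bop γ μ (lamB j)).eraseIdx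
                  (i : ℕ)).prod *
              Dop γ μ (lamB i)) := by
    rw [show Bprod γ μ lamB = (List.ofFn fun i : Fin n => Bop γ μ (lamB i)).prod from rfl,
      hB, mul_sub, mul_smul_comm, Finset.mul_sum]
    simp only [mul_smul_comm, ← mul_assoc]
  rw [← e1, ← e2, mul_assoc]

end
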